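/- Let k ≥ 1 and n ≥ 1 be integers and let M be the k×k matrix over R with rows and columns indexed by 0,…,k−1 whose (i,j) entry is S_k(n+k−1+j−i, i). Then det M = ε · ∏_{σ=1}^{n+k−1} w(k, σ), where ε = 1 if k is odd and ε = (−1)^{n−1} if k is even. -/

import Mathlib

open Finset

/-- The weighted sum `S_k(n,a)` over all compositions of `n` with parts in `{1,…,k}`,
for weights depending only on the tile length and starting position:
each composition `c = (c_1,…,c_m)` with partial sums `p_0 = 0`, `p_j = c_1 + ⋯ + c_j`
contributes `∏_{j=1}^m w(c_j, a + p_{j-1} + 1)`. -/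
def weightedSum {R : Type*} [CommRing R] (w : ℕ → ℕ → R) (k n a : ℕ) : R :=
  ∑ c ∈ Finset.univ.filter (fun c : Composition n => ∀ i ∈ c.blocks, i ≤ k),
    ∏ j ∈ Finset.range c.length,
      w (c.blocks.getD j 0) (a + c.sizeUpTo j + 1)


namespace WSaux

variable {R : Type*} [CommRing R] (w : ℕ → ℕ → R) (k : ℕ)

lemma weightedSum_zero (a : ℕ) : weightedSum w k 0 a = 1 := by
  rw [weightedSum]
  have h1 : ∀ c : Composition 0, c.length = 0 := fun c => Nat.le_zero.mp c.length_le
  have h2 : ∀ c : Composition 0, c.blocks = [] := fun c =>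
    List.eq_nil_of_length_eq_zero (by rw [c.blocks_length, h1])
  rw [Finset.filter_true_of_mem (fun c _ => by simp [h2 c])]
  rw [Finset.sum_congr rfl (fun c _ => by rw [h1 c, Finset.range_zero, Finset.prod_empty])]
  simp [composition_card]

/-- Append a block `c` at the end of a composition of `N - c`. -/
def appComp (N c : ℕ) (hc : 1 ≤ c) (hcN : c ≤ N) (p : Composition (N - c)) : Composition N where
  blocks := p.blocks ++ [c]
  blocks_pos := by
    intro i hi
    rcases List.mem_append.mp hi with h | h
    · exact p.blocks_pos h
    · simp only [List.mem_singleton] at h; omega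
  blocks_sum := by
    simp [p.blocks_sum, Nat.sub_add_cancel hcN]

/-- Drop the last block of a composition. -/
def dropLastComp {N : ℕ} (p : Composition N) (h : p.blocks ≠ []) :
    Composition (N - p.blocks.getLast h) where
  blocks := p.blocks.dropLast
  blocks_pos := fun hi => p.blocks_pos (List.dropLast_sublist _ |>.subset hi)
  blocks_sum := by
    have := p.blocks_sum
    have h2 : p.blocks.dropLast.sum + p.blocks.getLast h = N := by
      conv_rhs => rw [← p.blocks_sum, ← List.dropLast_append_getLast h]
      rw [List.sum_append, List.sum_singleton]
    omega

end WSaux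

namespace WSaux2
open WSaux

variable {R : Type*} [CommRing R] (w : ℕ → ℕ → R) (k : ℕ)

lemma blocks_ne_nil {m : ℕ} (p : Composition (m+1)) : p.blocks ≠ [] := by
  intro h
  have := p.blocks_sum
  rw [h] at this
  simp at this

lemma prod_split {m a : ℕ} (p : Composition (m+1)) :
    (∏ j ∈ Finset.range p.length, w (p.blocks.getD j 0) (a + p.sizeUpTo j + 1)) =
      (∏ j ∈ Finset.range (dropLastComp p (blocks_ne_nil p)).length,
          w ((dropLastComp p (blocks_ne_nil p)).blocks.getD j 0)
            (a + (dropLastComp p (blocks_ne_nil p)).sizeUpTo j + 1)) *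
        w (p.blocks.getLast (blocks_ne_nil p))
          (a + (m + 1 - p.blocks.getLast (blocks_ne_nil p)) + 1) := by
  set q := dropLastComp p (blocks_ne_nil p) with hq
  have hlen : p.blocks.length = q.length + 1 := by
    have : 0 < p.blocks.length := List.length_pos_iff.mpr (blocks_ne_nil p)
    simp only [hq, dropLastComp, Composition.length, List.length_dropLast]
    omega
  have hplen : p.length = q.length + 1 := by
    simpa [Composition.length] using hlen
  rw [hplen, Finset.prod_range_succ]
  congr 1
  · refine Finset.prod_congr rfl fun j hj => ?_
    have hj' : j < q.length := Finset.mem_range.mp hj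
    have hjb : j < q.blocks.length := by rwa [q.blocks_length]
    have h1 : p.blocks.getD j 0 = q.blocks.getD j 0 := by
      rw [List.getD_eq_getElem _ _ (by omega : j < p.blocks.length),
        List.getD_eq_getElem _ _ hjb]
      show p.blocks[j] = (p.blocks.dropLast)[j]
      exact (List.getElem_dropLast _).symm
    have h2 : p.sizeUpTo j = q.sizeUpTo j := by
      show (p.blocks.take j).sum = (p.blocks.dropLast.take j).sum
      rw [List.dropLast_eq_take, List.take_take]
      congr 2
      omega
    rw [h1, h2]
  · have hidx : q.length = p.blocks.length - 1 := by omega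
    have h1 : p.blocks.getD q.length 0 = p.blocks.getLast (blocks_ne_nil p) :=
      calc p.blocks.getD q.length 0 = p.blocks.getD (p.blocks.length - 1) 0 := by rw [hidx]
        _ = p.blocks[p.blocks.length - 1] := List.getD_eq_getElem _ _ (by omega)
        _ = p.blocks.getLast (blocks_ne_nil p) := (List.getLast_eq_getElem (blocks_ne_nil p)).symm
    have h2 : p.sizeUpTo q.length = m + 1 - p.blocks.getLast (blocks_ne_nil p) := by
      have hs := q.blocks_sum
      have hx : p.sizeUpTo q.length = q.blocks.sum := by
        show (p.blocks.take q.length).sum = (p.blocks.dropLast).sum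
        rw [List.dropLast_eq_take, hidx]
      rw [hx, hs]
    rw [h1, h2]

end WSaux2

namespace WSaux3
open WSaux WSaux2

variable {R : Type*} [CommRing R] (w : ℕ → ℕ → R) (k : ℕ)

lemma weightedSum_rec (m a : ℕ) :
    weightedSum w k (m + 1) a =
      ∑ c ∈ Finset.Icc 1 (min k (m + 1)),
        weightedSum (R := R) w k (m + 1 - c) a * w c (a + (m + 1 - c) + 1) := by
  have expand : ∀ c ∈ Finset.Icc 1 (min k (m + 1)),
      weightedSum (R := R) w k (m + 1 - c) a * w c (a + (m + 1 - c) + 1) =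
      ∑ p ∈ Finset.univ.filter (fun p : Composition (m + 1 - c) => ∀ i ∈ p.blocks, i ≤ k),
        (∏ j ∈ Finset.range p.length, w (p.blocks.getD j 0) (a + p.sizeUpTo j + 1)) *
          w c (a + (m + 1 - c) + 1) := by
    intro c _
    rw [weightedSum, Finset.sum_mul]
  rw [Finset.sum_congr rfl expand, Finset.sum_sigma']
  rw [weightedSum]
  refine Finset.sum_bij'
    (fun p _ => ⟨p.blocks.getLast (blocks_ne_nil p), dropLastComp p (blocks_ne_nil p)⟩)
    (fun x hx => appComp (m + 1) x.1
      (by exact (Finset.mem_Icc.mp (Finset.mem_sigma.mp hx).1).1)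
      (by have := (Finset.mem_Icc.mp (Finset.mem_sigma.mp hx).1).2; omega) x.2)
    ?_ ?_ ?_ ?_ ?_
  · -- forward lands in sigma
    intro p hp
    rw [Finset.mem_filter] at hp
    rw [Finset.mem_sigma]
    have hmem : p.blocks.getLast (blocks_ne_nil p) ∈ p.blocks := List.getLast_mem _
    constructor
    · rw [Finset.mem_Icc]
      refine ⟨p.blocks_pos hmem, le_min (hp.2 _ hmem) ?_⟩
      calc p.blocks.getLast (blocks_ne_nil p) ≤ p.blocks.sum :=
            List.single_le_sum (fun x _ => Nat.zero_le x) _ hmem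
        _ = m + 1 := p.blocks_sum
    · rw [Finset.mem_filter]
      exact ⟨Finset.mem_univ _, fun i hi =>
        hp.2 i ((List.dropLast_sublist _).subset hi)⟩
  · -- backward lands in filter
    intro x hx
    rw [Finset.mem_sigma, Finset.mem_filter] at hx
    rw [Finset.mem_filter]
    refine ⟨Finset.mem_univ _, fun i hi => ?_⟩
    rcases List.mem_append.mp hi with h | h
    · exact hx.2.2 i h
    · simp only [List.mem_singleton] at h
      subst h
      exact (Finset.mem_Icc.mp hx.1).2.trans (min_le_left _ _)
  · -- left inverse
    intro p hp
    apply Composition.ext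
    exact List.dropLast_append_getLast (blocks_ne_nil p)
  · -- right inverse
    intro x hx
    obtain ⟨c, p⟩ := x
    have h1 : 1 ≤ c := (Finset.mem_Icc.mp (Finset.mem_sigma.mp hx).1).1
    have h2 : c ≤ m + 1 :=
      le_trans (Finset.mem_Icc.mp (Finset.mem_sigma.mp hx).1).2 (min_le_right _ _)
    show (⟨(appComp (m + 1) c h1 h2 p).blocks.getLast (blocks_ne_nil _),
        dropLastComp (appComp (m + 1) c h1 h2 p) (blocks_ne_nil _)⟩
        : Σ c' : ℕ, Composition (m + 1 - c')) = ⟨c, p⟩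
    have hc : (appComp (m + 1) c h1 h2 p).blocks.getLast (blocks_ne_nil _) = c :=
      List.getLast_append_singleton _
    refine Sigma.ext_iff.mpr ⟨hc, ?_⟩
    have key : (⟨m + 1 - (appComp (m + 1) c h1 h2 p).blocks.getLast (blocks_ne_nil _),
        dropLastComp (appComp (m + 1) c h1 h2 p) (blocks_ne_nil _)⟩ : Σ n, Composition n)
        = ⟨m + 1 - c, p⟩ := by
      apply Composition.sigma_eq_iff_blocks_eq.mpr
      show (p.blocks ++ [c]).dropLast = p.blocks
      exact List.dropLast_concat ..
    injection key
  · -- values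
    intro p hp
    exact prod_split w p

end WSaux3

namespace WSaux4
open WSaux WSaux2 WSaux3

variable {R : Type*} [CommRing R] (w : ℕ → ℕ → R) (k : ℕ)

def Sz (m : ℤ) (a : ℕ) : R := if 0 ≤ m then weightedSum w k m.toNat a else 0

lemma Sz_nonneg (m a : ℕ) : Sz (R := R) w k (m : ℤ) a = weightedSum w k m a := by
  simp [Sz]

lemma Sz_neg {m : ℤ} (h : m < 0) (a : ℕ) : Sz (R := R) w k m a = 0 := by
  simp [Sz, not_le.mpr h]

lemma Sz_zero (a : ℕ) : Sz (R := R) w k 0 a = 1 := by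
  have := Sz_nonneg (R := R) w k 0 a
  simpa [weightedSum_zero] using this

lemma Sz_rec {m : ℤ} (hm : 1 ≤ m) (a : ℕ) :
    Sz (R := R) w k m a
      = ∑ c ∈ Finset.Icc 1 k,
          Sz (R := R) w k (m - c) a * w c (a + (m - c).toNat + 1) := by
  obtain ⟨M, rfl⟩ : ∃ M : ℕ, m = ((M : ℤ) + 1) := ⟨(m - 1).toNat, by omega⟩
  have hcast : ((M : ℤ) + 1) = ((M + 1 : ℕ) : ℤ) := by push_cast; ring
  rw [hcast, Sz_nonneg, weightedSum_rec]
  refine Eq.trans (Finset.sum_congr rfl fun c hc => ?_)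
    (Finset.sum_subset (Finset.Icc_subset_Icc_right (min_le_left k (M + 1))) fun c hc hc' => ?_)
  · rw [Finset.mem_Icc] at hc
    have h1 : c ≤ M + 1 := le_trans hc.2 (min_le_right _ _)
    have h2 : (((M + 1 : ℕ) : ℤ) - c) = ((M + 1 - c : ℕ) : ℤ) := by omega
    rw [h2, Sz_nonneg]
    simp
  · have hneg : (((M + 1 : ℕ) : ℤ) - c) < 0 := by
      rw [Finset.mem_Icc] at hc
      simp only [Finset.mem_Icc, not_and, not_le] at hc'
      have := hc' hc.1
      omega
    rw [Sz_neg w k hneg, zero_mul]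

def colMat (t : ℤ) : Matrix (Fin k) (Fin k) R :=
  Matrix.of fun i j => Sz w k (t + j - i) i

lemma det_colMat_zero : (colMat (R := R) w k 0).det = 1 := by
  have htri : (colMat (R := R) w k 0).BlockTriangular id := by
    intro i j hij
    exact Sz_neg w k (by simp only [id] at hij; omega) i
  rw [Matrix.det_of_upperTriangular htri]
  refine Finset.prod_eq_one fun i _ => ?_
  show Sz w k (0 + i - i) i = 1
  rw [show (0 : ℤ) + i - i = 0 by ring, Sz_zero]

end WSaux4

namespace WSaux5
open WSaux WSaux2 WSaux3 WSaux4

variable {R : Type*} [CommRing R] (w : ℕ → ℕ → R)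

lemma det_colMat_step (k' : ℕ) (t : ℤ) (ht : 1 ≤ t) :
    (colMat (R := R) w (k' + 1) t).det
      = (-1) ^ k' * w (k' + 1) t.toNat * (colMat (R := R) w (k' + 1) (t - 1)).det := by
  set K := k' + 1 with hK
  set N := colMat (R := R) w K (t - 1) with hN
  set A := N.submatrix id (finRotate (k' + 1)) with hA
  set d : Fin K → R := fun j =>
    if j = Fin.last k' then w K t.toNat
    else w (k' - (j : ℕ)) ((t + (j : ℕ) + 1).toNat) with hd
  have hANe : ∀ (i : Fin K) (j : Fin K), j ≠ Fin.last k' → A i j = Sz w K (t + j - i) i := by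
    intro i j hj
    show N i (finRotate (k' + 1) j) = _
    rw [finRotate_succ_apply]
    show Sz w K (t - 1 + ((j + 1 : Fin K) : ℕ) - i) i = _
    have hv : ((j + 1 : Fin K) : ℕ) = (j : ℕ) + 1 := by
      rw [Fin.val_add_one]
      simp [hj]
    rw [hv]
    congr 1
    push_cast
    ring
  have hAlast : ∀ i : Fin K, A i (Fin.last k') = Sz w K (t - 1 - i) i := by
    intro i
    show N i (finRotate (k' + 1) (Fin.last k')) = _
    rw [finRotate_succ_apply]
    show Sz w K (t - 1 + ((Fin.last k' + 1 : Fin K) : ℕ) - i) i = _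
    have hv : ((Fin.last k' + 1 : Fin K) : ℕ) = 0 := by
      simp [Fin.val_add_one]
    rw [hv]
    congr 1
    push_cast
    ring
  have hcol : colMat (R := R) w K t
      = A.updateCol (Fin.last k') (fun r => ∑ j, d j • A r j) := by
    ext i j
    rw [Matrix.updateCol_apply]
    by_cases hj : j = Fin.last k'
    · simp only [if_pos hj]
      subst hj
      show Sz w K (t + (k' : ℕ) - i) i = _
      have hm : 1 ≤ t + (k' : ℕ) - (i : ℕ) := by
        have : (i : ℕ) ≤ k' := Fin.le_last i |>.trans (le_refl _) |> fun h => Nat.lt_succ_iff.mp i.isLt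
        omega
      rw [Sz_rec w K hm i]
      refine Finset.sum_bij' (fun c _ => if h : c = K then Fin.last k'
          else ⟨k' - c, by omega⟩)
        (fun j _ => if j = Fin.last k' then K else k' - (j : ℕ)) ?_ ?_ ?_ ?_ ?_
      · intro c _; exact Finset.mem_univ _
      · intro j _
        rw [Finset.mem_Icc]
        by_cases hj : j = Fin.last k'
        · simp only [if_pos hj]
          omega
        · have : (j : ℕ) < k' := by
            have := Fin.lt_last_iff_ne_last.mpr hj
            exact this
          simp only [if_neg hj]
          omega
      · intro c hc
        rw [Finset.mem_Icc] at hc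
        by_cases h : c = K
        · simp [h]
        · have hck : c ≤ k' := by omega
          simp only [dif_neg h]
          have hne : (⟨k' - c, by omega⟩ : Fin K) ≠ Fin.last k' := by
            intro hcontra
            have := congrArg Fin.val hcontra
            simp only [Fin.val_last] at this
            omega
          simp only [if_neg hne]
          omega
      · intro j hj
        by_cases hjl : j = Fin.last k'
        · simp [hjl]
        · have hv : (j : ℕ) < k' := Fin.lt_last_iff_ne_last.mpr hjl
          simp only [if_neg hjl]
          have h2 : ¬(k' - (j : ℕ) = K) := by omega
          simp only [dif_neg h2]
          apply Fin.ext
          simp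
          omega
      · intro c hc
        rw [Finset.mem_Icc] at hc
        by_cases h : c = K
        · subst h
          beta_reduce
          rw [dif_pos rfl]
          rw [hAlast i]
          simp only [hd, if_pos rfl, smul_eq_mul]
          have harg : t + (k' : ℕ) - i - (K : ℕ) = t - 1 - i := by omega
          rw [harg]
          by_cases hz : 0 ≤ t - 1 - (i : ℤ)
          · rw [mul_comm]
            congr 2
            omega
          · rw [Sz_neg w K (by omega), zero_mul, mul_zero]
        · have hck : c ≤ k' := by omega
          simp only [dif_neg h]
          have hne : (⟨k' - c, by omega⟩ : Fin K) ≠ Fin.last k' := by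
            intro hcontra
            have := congrArg Fin.val hcontra
            simp only [Fin.val_last] at this
            omega
          rw [hANe i _ hne]
          simp only [hd, if_neg hne, smul_eq_mul]
          rw [show k' - (k' - c) = c by omega]
          have harg : t + ((k' - c : ℕ) : ℤ) - (i : ℕ) = t + ((k' : ℕ) : ℤ) - (i : ℕ) - c := by
            omega
          rw [harg]
          by_cases hz : 0 ≤ t + ((k' : ℕ) : ℤ) - i - c
          · rw [mul_comm]
            congr 2
            omega
          · rw [Sz_neg w K (by omega), zero_mul, mul_zero]
    · simp only [if_neg hj]
      rw [hANe i j hj]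
      rfl
  rw [hcol, Matrix.det_updateCol_sum]
  have hdlast : d (Fin.last k') = w K t.toNat := by simp [hd]
  rw [hdlast, hA, Matrix.det_permute', sign_finRotate]
  push_cast
  rw [smul_eq_mul]
  rw [show K - 1 = k' by omega]
  ring

end WSaux5

namespace WSaux6
open WSaux WSaux2 WSaux3 WSaux4 WSaux5

variable {R : Type*} [CommRing R] (w : ℕ → ℕ → R)

lemma det_colMat_pow (k' : ℕ) (t : ℕ) :
    (colMat (R := R) w (k' + 1) (t : ℤ)).det
      = (-1) ^ (k' * t) * ∏ σ ∈ Finset.Icc 1 t, w (k' + 1) σ := by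
  induction t with
  | zero => simp [det_colMat_zero]
  | succ t ih =>
    have h1 : ((t + 1 : ℕ) : ℤ) = ((t : ℤ) + 1) := by push_cast; ring
    rw [h1, det_colMat_step w k' ((t : ℤ) + 1) (by omega)]
    rw [show ((t : ℤ) + 1 - 1) = (t : ℤ) by ring, ih]
    rw [show ((t : ℤ) + 1).toNat = t + 1 by omega]
    rw [Finset.prod_Icc_succ_top (by omega : 1 ≤ t + 1)]
    rw [show k' * (t + 1) = k' * t + k' by ring, pow_add]
    ring

theorem weightedSum_toeplitz_det (k : ℕ) (hk : 1 ≤ k) (n : ℕ) (hn : 1 ≤ n) :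
    Matrix.det (Matrix.of fun i j : Fin k =>
        weightedSum (R := R) w k (n + k - 1 + (j : ℕ) - (i : ℕ)) (i : ℕ))
      = (if Odd k then 1 else (-1) ^ (n - 1)) *
          ∏ σ ∈ Finset.Icc 1 (n + k - 1), w k σ := by
  obtain ⟨k', rfl⟩ : ∃ k', k = k' + 1 := ⟨k - 1, by omega⟩
  have hmat : (Matrix.of fun i j : Fin (k' + 1) =>
        weightedSum (R := R) w (k' + 1) (n + (k' + 1) - 1 + (j : ℕ) - (i : ℕ)) (i : ℕ))
      = colMat w (k' + 1) ((n + k' : ℕ) : ℤ) := by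
    ext i j
    show weightedSum (R := R) w (k' + 1) (n + (k' + 1) - 1 + (j : ℕ) - (i : ℕ)) (i : ℕ)
      = Sz w (k' + 1) (((n + k' : ℕ) : ℤ) + j - i) i
    have hi : (i : ℕ) ≤ k' := Nat.lt_succ_iff.mp i.isLt
    have h0 : (0 : ℤ) ≤ ((n + k' : ℕ) : ℤ) + (j : ℕ) - (i : ℕ) := by omega
    rw [Sz, if_pos h0]
    congr 1
    omega
  rw [hmat, det_colMat_pow]
  have hprod : Finset.Icc 1 (n + k') = Finset.Icc 1 (n + (k' + 1) - 1) := by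
    have h : n + (k' + 1) - 1 = n + k' := by omega
    rw [h]
  rw [hprod]
  congr 1
  rcases Nat.even_or_odd k' with hke | hko
  · rw [if_pos (by simpa [Nat.odd_add_one, Nat.not_odd_iff_even] using hke)]
    exact Even.neg_one_pow (hke.mul_right _)
  · rw [if_neg (by simp [Nat.odd_add_one, Nat.not_even_iff_odd, hko])]
    obtain ⟨s, hs⟩ := hko
    rcases Nat.even_or_odd (n - 1) with he | ho
    · obtain ⟨r, hr⟩ := he
      rw [Even.neg_one_pow ⟨r, hr⟩]
      refine Even.neg_one_pow (Even.mul_left ⟨r + s + 1, by omega⟩ _)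
    · obtain ⟨r, hr⟩ := ho
      rw [Odd.neg_one_pow ⟨r, hr⟩]
      refine Odd.neg_one_pow (Odd.mul ⟨s, hs⟩ ⟨r + s + 1, by omega⟩)

end WSaux6


/-- Let `k ≥ 1`, `n ≥ 1`, and let `M` be the `k × k` matrix over `R`
whose `(i,j)` entry is `S_k(n+k-1+j-i, i)`. Then
`det M = ε · ∏_{σ=1}^{n+k-1} w(k,σ)`, where `ε = 1` if `k` is odd and
`ε = (-1)^{n-1}` if `k` is even. -/
theorem weightedSum_toeplitz_determinant {R : Type*} [CommRing R] (w : ℕ → ℕ → R)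
    (k : ℕ) (hk : 1 ≤ k) (n : ℕ) (hn : 1 ≤ n) :
    Matrix.det (Matrix.of fun i j : Fin k =>
        weightedSum w k (n + k - 1 + (j : ℕ) - (i : ℕ)) (i : ℕ))
      = (if Odd k then 1 else (-1) ^ (n - 1)) *
          ∏ σ ∈ Finset.Icc 1 (n + k - 1), w k σ := by
  exact WSaux6.weightedSum_toeplitz_det w k hk n hn
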